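/- Let P_t be a Markov semigroup on ℝ^n and d a metric such that for all nonnegative bounded Borel f, all t > 0, x, y, and α > 1, the Wang Harnack inequality (P_t f)^α(x) ≤ (P_t f^α)(y)·exp( C·α/(α−1)·d(x,y)²/t ) holds, and suppose P_t has a strictly positive density p_t(x,·) with respect to a reference measure. Then for q = 1/(α−1) with α ∈ (1,2), the integrated Harnack inequality ( ∫ (p_t(x,z)/p_t(y,z))^q p_t(y,z) dz )^{1/q} ≤ exp( C·(1+q)·d(x,y)²/t ) holds. -/

import Mathlib

open MeasureTheory Filter
open scoped ENNReal NNReal Topology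

section LyapAux
/-- Lyapunov inequality via Hölder for a weight of integral one. -/
lemma lyap_aux {E : Type*} [MeasurableSpace E] {μ : Measure E} (w u : E → ℝ) {s s' : ℝ}
    (hss' : s.HolderConjugate s')
    (hw_int : Integrable w μ) (hw_nn : 0 ≤ᵐ[μ] w) (hw1 : ∫ z, w z ∂μ = 1)
    (hu_meas : AEMeasurable u μ) (hu_nn : ∀ z, 0 ≤ u z)
    (hint : Integrable (fun z => w z * u z ^ s) μ) :
    ∫ z, w z * u z ∂μ ≤ (∫ z, w z * u z ^ s ∂μ) ^ (1 / s) := by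
  set W : E → ℝ≥0∞ := fun z => ENNReal.ofReal (w z) with hW
  set U : E → ℝ≥0∞ := fun z => ENNReal.ofReal (u z) with hU
  have hWm : AEMeasurable W μ := hw_int.aemeasurable.ennreal_ofReal
  have hUm : AEMeasurable U μ := hu_meas.ennreal_ofReal
  have hs0 : (0:ℝ) ≤ 1/s := by
    have := hss'.pos; positivity
  have hs0' : (0:ℝ) ≤ 1/s' := by
    have := hss'.symm.pos; positivity
  have hWint : ∫⁻ z, W z ∂μ = 1 := by
    rw [← ofReal_integral_eq_lintegral_ofReal hw_int hw_nn, hw1, ENNReal.ofReal_one]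
  have holder := ENNReal.lintegral_mul_le_Lp_mul_Lq μ hss'
    (f := fun z => U z * W z ^ (1/s)) (g := fun z => W z ^ (1/s'))
    ((hUm.mul (hWm.pow aemeasurable_const))) (hWm.pow aemeasurable_const)
  have key : ∫⁻ z, W z * U z ∂μ ≤ (∫⁻ z, W z * U z ^ s ∂μ) ^ (1/s) := by
    calc ∫⁻ z, W z * U z ∂μ
        = ∫⁻ z, (fun z => U z * W z ^ (1/s)) z * (fun z => W z ^ (1/s')) z ∂μ := by
          apply lintegral_congr fun z => ?_
          have : W z ^ (1/s) * W z ^ (1/s') = W z := by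
            rw [← ENNReal.rpow_add_of_nonneg _ _ hs0 hs0']
            rw [show 1/s + 1/s' = 1 by
              rw [one_div, one_div]; exact hss'.inv_add_inv_eq_one]
            exact ENNReal.rpow_one _
          rw [mul_assoc, this, mul_comm]
      _ ≤ (∫⁻ z, ((fun z => U z * W z ^ (1/s)) z) ^ s ∂μ) ^ (1/s)
            * (∫⁻ z, ((fun z => W z ^ (1/s')) z) ^ s' ∂μ) ^ (1/s') := holder
      _ = (∫⁻ z, W z * U z ^ s ∂μ) ^ (1/s) := by
          have h1 : ∀ z, (U z * W z ^ (1/s)) ^ s = W z * U z ^ s := by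
            intro z
            rw [ENNReal.mul_rpow_of_nonneg _ _ hss'.nonneg, ← ENNReal.rpow_mul,
              one_div, inv_mul_cancel₀ hss'.pos.ne', ENNReal.rpow_one, mul_comm]
          have h2 : ∀ z, (W z ^ (1/s')) ^ s' = W z := by
            intro z
            rw [← ENNReal.rpow_mul, one_div, inv_mul_cancel₀ hss'.symm.pos.ne',
              ENNReal.rpow_one]
          simp only [h1, h2, hWint, ENNReal.one_rpow, mul_one]
  have hmul_nn : 0 ≤ᵐ[μ] fun z => w z * u z := by
    filter_upwards [hw_nn] with z hz; exact mul_nonneg hz (hu_nn z)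
  have hmuls_nn : 0 ≤ᵐ[μ] fun z => w z * u z ^ s := by
    filter_upwards [hw_nn] with z hz
    exact mul_nonneg hz (Real.rpow_nonneg (hu_nn z) s)
  have hR : ∫⁻ z, W z * U z ^ s ∂μ = ENNReal.ofReal (∫ z, w z * u z ^ s ∂μ) := by
    rw [ofReal_integral_eq_lintegral_ofReal hint hmuls_nn]
    apply lintegral_congr_ae
    filter_upwards [hw_nn] with z hz
    rw [ENNReal.ofReal_mul hz, ENNReal.ofReal_rpow_of_nonneg (hu_nn z) hss'.nonneg]
  have hRne : (∫⁻ z, W z * U z ^ s ∂μ) ^ (1/s) ≠ ⊤ := by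
    rw [hR]; exact ENNReal.rpow_ne_top_of_nonneg hs0 ENNReal.ofReal_ne_top
  have hL : ∫ z, w z * u z ∂μ = (∫⁻ z, W z * U z ∂μ).toReal := by
    rw [integral_eq_lintegral_of_nonneg_ae hmul_nn
      (hw_int.aestronglyMeasurable.mul hu_meas.aestronglyMeasurable)]
    congr 1
    apply lintegral_congr_ae
    filter_upwards [hw_nn] with z hz
    rw [ENNReal.ofReal_mul hz]
  rw [hL]
  calc (∫⁻ z, W z * U z ∂μ).toReal
      ≤ ((∫⁻ z, W z * U z ^ s ∂μ) ^ (1/s)).toReal := ENNReal.toReal_mono hRne key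
    _ = (∫ z, w z * u z ^ s ∂μ) ^ (1/s) := by
        rw [hR, ← ENNReal.toReal_rpow, ENNReal.toReal_ofReal (integral_nonneg_of_ae hmuls_nn)]
end LyapAux

theorem stmt19 {E : Type*} [MeasurableSpace E] (μ : Measure E)
    (p : ℝ → E → E → ℝ) (d : E → E → ℝ) (C : ℝ)
    (hpos : ∀ t, 0 < t → ∀ x z, 0 < p t x z)
    (hprob : ∀ t, 0 < t → ∀ x, ∫ z, p t x z ∂μ = 1)
    (hWang : ∀ f : E → ℝ, Measurable f → (∀ z, 0 ≤ f z) → (∃ Cb : ℝ, ∀ z, f z ≤ Cb) →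
      ∀ t, 0 < t → ∀ x y : E, ∀ α : ℝ, 1 < α →
        (∫ z, p t x z * f z ∂μ) ^ α
          ≤ (∫ z, p t y z * (f z) ^ α ∂μ)
            * Real.exp (C * α / (α - 1) * d x y ^ 2 / t)) :
    ∀ t, 0 < t → ∀ x y : E, ∀ α : ℝ, 1 < α → α < 2 →
      (∫ z, (p t x z / p t y z) ^ (1 / (α - 1)) * p t y z ∂μ) ^ (α - 1)
        ≤ Real.exp (C * (1 + 1 / (α - 1)) * d x y ^ 2 / t) := by
  intro t ht x y α hα1 hα2
  have hβ : (0:ℝ) < α - 1 := by linarith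
  have hβ1 : α - 1 < 1 := by linarith
  have hne : α - 1 ≠ 0 := hβ.ne'
  have h2α : (2:ℝ) - α ≠ 0 := by intro h; linarith
  have hα0 : (0:ℝ) < α := by linarith
  set q : ℝ := 1 / (α - 1) with hqdef
  have hq1 : 1 < q := by
    rw [hqdef, lt_div_iff₀ hβ]; linarith
  have hexp_eq : C * α / (α - 1) * d x y ^ 2 / t = C * (1 + 1 / (α - 1)) * d x y ^ 2 / t := by
    congr 2
    field_simp
    ring
  set Φ : ℝ := Real.exp (C * (1 + 1 / (α - 1)) * d x y ^ 2 / t) with hΦdef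
  -- Step 0 : 1 ≤ Φ, from Harnack applied to the constant function 1
  have hΦ1 : 1 ≤ Φ := by
    have h := hWang (fun _ => 1) measurable_const (fun _ => zero_le_one)
      ⟨1, fun _ => le_rfl⟩ t ht x y α hα1
    simp only [mul_one, Real.one_rpow] at h
    rw [hprob t ht x, hprob t ht y, Real.one_rpow, one_mul, hexp_eq] at h
    exact h
  have hΦ0 : 0 < Φ := lt_of_lt_of_le one_pos hΦ1
  -- integrability of the densities
  have hIx : Integrable (fun z => p t x z) μ := by
    by_contra h
    have := hprob t ht x
    rw [integral_undef h] at this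
    norm_num at this
  have hIy : Integrable (fun z => p t y z) μ := by
    by_contra h
    have := hprob t ht y
    rw [integral_undef h] at this
    norm_num at this
  set r : E → ℝ := fun z => p t x z / p t y z with hrdef
  have hr_pos : ∀ z, 0 < r z := fun z => div_pos (hpos t ht x z) (hpos t ht y z)
  show (∫ z, r z ^ q * p t y z ∂μ) ^ (α - 1) ≤ Φ
  -- if the integrand is not integrable, the claim is trivial
  by_cases hInt : Integrable (fun z => r z ^ q * p t y z) μ
  swap
  · rw [integral_undef hInt, Real.zero_rpow hne]
    exact hΦ0.le
  set I : ℝ := ∫ z, r z ^ q * p t y z ∂μ with hIdef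
  have hI_nn : 0 ≤ I :=
    integral_nonneg fun z => mul_nonneg (Real.rpow_nonneg (hr_pos z).le q) (hpos t ht y z).le
  -- measurable representative of r, nonnegative everywhere
  set g : E → ℝ := fun z =>
    max (hIx.aestronglyMeasurable.mk _ z / hIy.aestronglyMeasurable.mk _ z) 0 with hgdef
  have hg_meas : Measurable g :=
    ((hIx.aestronglyMeasurable.stronglyMeasurable_mk.measurable).div
      hIy.aestronglyMeasurable.stronglyMeasurable_mk.measurable).max measurable_const
  have hg_nn : ∀ z, 0 ≤ g z := fun z => le_max_right _ _
  have hg_ae : g =ᵐ[μ] r := by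
    filter_upwards [hIx.aestronglyMeasurable.ae_eq_mk, hIy.aestronglyMeasurable.ae_eq_mk]
      with z h1 h2
    rw [hgdef]
    simp only [← h1, ← h2]
    exact max_eq_left (hr_pos z).le
  -- conjugate exponents for Lyapunov's inequality
  set s : ℝ := (α * (2 - α))⁻¹ with hsdef
  set s' : ℝ := ((α - 1) ^ 2)⁻¹ with hs'def
  have hκpos : 0 < α * (2 - α) := by nlinarith
  have hκ1 : α * (2 - α) < 1 := by nlinarith [sq_nonneg (α - 1)]
  have hss' : s.HolderConjugate s' := by
    refine Real.holderConjugate_iff.mpr ⟨?_, ?_⟩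
    · rw [hsdef, lt_inv_comm₀ one_pos hκpos]
      simpa using hκ1
    · rw [hsdef, hs'def, inv_inv, inv_inv]; ring
  have hsinv : s⁻¹ = α * (2 - α) := by rw [hsdef, inv_inv]
  set e : ℝ := q - 1 with hedef
  have he_nn : 0 ≤ e := by rw [hedef]; linarith
  have hq'pos : (0:ℝ) < 1 / (2 - α) := by
    apply div_pos one_pos; linarith
  have hαs : α * s = 1 / (2 - α) := by
    rw [hsdef]
    field_simp
  have heq' : e * (1 / (2 - α)) = q := by
    rw [hedef, hqdef]
    field_simp
    ring
  -- the main estimate for each truncation level m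
  have key : ∀ m : ℕ,
      (∫ z, min (r z ^ q) (m * r z) * p t y z ∂μ) ≤ (I ^ (α * (2 - α)) * Φ) ^ α⁻¹ := by
    intro m
    set f : E → ℝ := fun z => min (g z ^ e) (m : ℝ) with hfdef
    have hf_meas : Measurable f := (hg_meas.pow measurable_const).min measurable_const
    have hf_nn : ∀ z, 0 ≤ f z := fun z =>
      le_min (Real.rpow_nonneg (hg_nn z) e) (Nat.cast_nonneg m)
    have hW := hWang f hf_meas hf_nn ⟨m, fun z => min_le_right _ _⟩ t ht x y α hα1
    rw [hexp_eq] at hW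
    -- identify the left integral
    have hL : ∫ z, p t x z * f z ∂μ = ∫ z, min (r z ^ q) (m * r z) * p t y z ∂μ := by
      apply integral_congr_ae
      filter_upwards [hg_ae] with z hz
      have hpy := (hpos t ht y z).ne'
      have h1 : p t x z = r z * p t y z := (div_mul_cancel₀ _ hpy).symm
      have hpow : r z * r z ^ e = r z ^ q := by
        rw [show q = 1 + e by rw [hedef]; ring, Real.rpow_add (hr_pos z), Real.rpow_one]
      have h2 : r z * min (r z ^ e) (m : ℝ) = min (r z ^ q) (m * r z) := by
        rw [mul_min_of_nonneg _ _ (hr_pos z).le, hpow, mul_comm (r z) (m : ℝ)]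
      calc p t x z * f z = r z * p t y z * min (r z ^ e) (m : ℝ) := by
              rw [h1, hfdef]; simp only [hz]
        _ = (r z * min (r z ^ e) (m : ℝ)) * p t y z := by ring
        _ = min (r z ^ q) (m * r z) * p t y z := by rw [h2]
    -- bound the right integral via Lyapunov's inequality
    have hu_meas : AEMeasurable (fun z => f z ^ α) μ :=
      (hf_meas.pow measurable_const).aemeasurable
    have hfs_eq : ∀ z, (f z ^ α) ^ s = f z ^ (1 / (2 - α)) := by
      intro z
      rw [← Real.rpow_mul (hf_nn z), hαs]
    have hint_s : Integrable (fun z => p t y z * (f z ^ α) ^ s) μ := by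
      apply Integrable.mono' (hIy.const_mul ((m : ℝ) ^ (1 / (2 - α))))
      · exact hIy.aestronglyMeasurable.mul
          (((hf_meas.pow measurable_const).pow measurable_const).aestronglyMeasurable)
      · filter_upwards with z
        have hnn : 0 ≤ p t y z * (f z ^ α) ^ s :=
          mul_nonneg (hpos t ht y z).le (Real.rpow_nonneg (Real.rpow_nonneg (hf_nn z) α) s)
        rw [Real.norm_eq_abs, abs_of_nonneg hnn, hfs_eq z, mul_comm]
        exact mul_le_mul_of_nonneg_right
          (Real.rpow_le_rpow (hf_nn z) (min_le_right _ _) hq'pos.le) (hpos t ht y z).le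
    have hRle : ∫ z, p t y z * (f z ^ α) ^ s ∂μ ≤ I := by
      rw [hIdef]
      apply integral_mono_ae hint_s hInt
      filter_upwards [hg_ae] with z hz
      rw [hfs_eq z]
      have hfg : f z ^ (1 / (2 - α)) ≤ r z ^ q := by
        calc f z ^ (1 / (2 - α)) ≤ (g z ^ e) ^ (1 / (2 - α)) :=
              Real.rpow_le_rpow (hf_nn z) (min_le_left _ _) hq'pos.le
          _ = g z ^ q := by rw [← Real.rpow_mul (hg_nn z), heq']
          _ = r z ^ q := by rw [hz]
      calc p t y z * f z ^ (1 / (2 - α)) ≤ p t y z * r z ^ q :=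
            mul_le_mul_of_nonneg_left hfg (hpos t ht y z).le
        _ = r z ^ q * p t y z := mul_comm _ _
    have hlyap := lyap_aux (fun z => p t y z) (fun z => f z ^ α) hss' hIy
      (Filter.Eventually.of_forall fun z => (hpos t ht y z).le) (hprob t ht y) hu_meas
      (fun z => Real.rpow_nonneg (hf_nn z) α) hint_s
    have hR : ∫ z, p t y z * f z ^ α ∂μ ≤ I ^ (α * (2 - α)) := by
      refine hlyap.trans ?_
      rw [one_div, hsinv]
      apply Real.rpow_le_rpow ?_ hRle hκpos.le
      exact integral_nonneg fun z =>
        mul_nonneg (hpos t ht y z).le (Real.rpow_nonneg (Real.rpow_nonneg (hf_nn z) α) s)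
    have hcomb : (∫ z, min (r z ^ q) (m * r z) * p t y z ∂μ) ^ α ≤ I ^ (α * (2 - α)) * Φ := by
      rw [← hL]
      exact hW.trans (mul_le_mul_of_nonneg_right hR hΦ0.le)
    have hA_nn : 0 ≤ ∫ z, min (r z ^ q) (m * r z) * p t y z ∂μ :=
      integral_nonneg fun z => mul_nonneg
        (le_min (Real.rpow_nonneg (hr_pos z).le q)
          (mul_nonneg (Nat.cast_nonneg m) (hr_pos z).le)) (hpos t ht y z).le
    calc ∫ z, min (r z ^ q) (m * r z) * p t y z ∂μ
        = ((∫ z, min (r z ^ q) (m * r z) * p t y z ∂μ) ^ α) ^ α⁻¹ :=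
          (Real.rpow_rpow_inv hA_nn hα0.ne').symm
      _ ≤ (I ^ (α * (2 - α)) * Φ) ^ α⁻¹ :=
          Real.rpow_le_rpow (Real.rpow_nonneg hA_nn α) hcomb (inv_nonneg.mpr hα0.le)
  -- monotone convergence of the truncated integrals
  have hr_aem : AEMeasurable r μ := hIx.aemeasurable.div hIy.aemeasurable
  have hlim : Tendsto (fun m : ℕ => ∫ z, min (r z ^ q) (m * r z) * p t y z ∂μ)
      atTop (𝓝 I) := by
    rw [hIdef]
    apply tendsto_integral_of_dominated_convergence (fun z => r z ^ q * p t y z)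
    · intro m
      exact (((hr_aem.pow aemeasurable_const).min
        (aemeasurable_const.mul hr_aem)).mul hIy.aemeasurable).aestronglyMeasurable
    · exact hInt
    · intro m
      filter_upwards with z
      have hnn : 0 ≤ min (r z ^ q) ((m : ℝ) * r z) * p t y z :=
        mul_nonneg (le_min (Real.rpow_nonneg (hr_pos z).le q)
          (mul_nonneg (Nat.cast_nonneg m) (hr_pos z).le)) (hpos t ht y z).le
      rw [Real.norm_eq_abs, abs_of_nonneg hnn]
      exact mul_le_mul_of_nonneg_right (min_le_left _ _) (hpos t ht y z).le
    · filter_upwards with z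
      obtain ⟨M, hM⟩ := exists_nat_ge (r z ^ q / r z)
      apply tendsto_atTop_of_eventually_const (i₀ := M)
      intro m hm
      have h1 : r z ^ q / r z ≤ (m : ℝ) := hM.trans (Nat.cast_le.mpr hm)
      rw [div_le_iff₀ (hr_pos z)] at h1
      rw [min_eq_left (by linarith : r z ^ q ≤ (m : ℝ) * r z)]
  have hIle : I ≤ (I ^ (α * (2 - α)) * Φ) ^ α⁻¹ :=
    le_of_tendsto hlim (Filter.Eventually.of_forall key)
  -- conclusion
  by_cases hI1 : I ≤ 1
  · calc I ^ (α - 1) ≤ 1 := Real.rpow_le_one hI_nn hI1 hβ.le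
      _ ≤ Φ := hΦ1
  · push_neg at hI1
    have hI0 : 0 < I := lt_trans one_pos hI1
    have hB_nn : 0 ≤ I ^ (α * (2 - α)) * Φ := mul_nonneg (Real.rpow_nonneg hI_nn _) hΦ0.le
    have h2 : I ^ α ≤ I ^ (α * (2 - α)) * Φ := by
      calc I ^ α ≤ ((I ^ (α * (2 - α)) * Φ) ^ α⁻¹) ^ α :=
            Real.rpow_le_rpow hI_nn hIle hα0.le
        _ = I ^ (α * (2 - α)) * Φ := Real.rpow_inv_rpow hB_nn hα0.ne'
    have hsplit : I ^ α = I ^ (α * (2 - α)) * I ^ (α * (α - 1)) := by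
      rw [← Real.rpow_add hI0]; congr 1; ring
    rw [hsplit] at h2
    have hpow_pos : 0 < I ^ (α * (2 - α)) := Real.rpow_pos_of_pos hI0 _
    have h3 : I ^ (α * (α - 1)) ≤ Φ := le_of_mul_le_mul_left h2 hpow_pos
    calc I ^ (α - 1) ≤ I ^ (α * (α - 1)) := by
          rw [Real.rpow_le_rpow_left_iff hI1]; nlinarith
      _ ≤ Φ := h3
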